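/- Fix 1 ≤ i ≤ n and a cube Q in ℝ^n with center x₀ and side length ℓ(Q). Let 0 < A₁ < 1/2. If y ∈ ℝ^n satisfies (y_i − (x₀)_i)/|y − x₀| > 2A₁ and |y − x₀| > √n(2/A₁ + 1)ℓ(Q), then for every z ∈ Q it holds that (y_i − z_i)/|y − z| ≥ A₁. -/

import Mathlib

/-- Observation (5.6): if `(y_i - (x₀)_i)/|y - x₀| > 2A₁` with `0 < A₁ < 1/2` and
`|y - x₀| > √n (2/A₁ + 1) ℓ(Q)`, then for every `z` in the cube `Q` of center `x₀` and
side `ℓ(Q)` one has `(y_i - z_i)/|y - z| ≥ A₁`. -/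
theorem riesz_angle_estimate (n : ℕ) (hn : 0 < n) (i : Fin n)
    (x₀ : EuclideanSpace ℝ (Fin n)) (ℓ : ℝ) (hℓ : 0 < ℓ)
    (A₁ : ℝ) (hA₁ : 0 < A₁) (hA₁' : A₁ < 1 / 2)
    (y : EuclideanSpace ℝ (Fin n))
    (hy1 : 2 * A₁ < (y i - x₀ i) / ‖y - x₀‖)
    (hy2 : Real.sqrt n * (2 / A₁ + 1) * ℓ < ‖y - x₀‖)
    (z : EuclideanSpace ℝ (Fin n)) (hz : ∀ j, |z j - x₀ j| ≤ ℓ / 2) :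
    A₁ ≤ (y i - z i) / ‖y - z‖ := by
  set d : ℝ := Real.sqrt n * (ℓ / 2) with hd_def
  have hsqrt1 : (1 : ℝ) ≤ Real.sqrt n := by
    rw [show (1:ℝ) = Real.sqrt 1 by simp]
    exact Real.sqrt_le_sqrt (by exact_mod_cast hn)
  have hd_pos : 0 < d := by positivity
  -- bound on ‖z - x₀‖
  have hzx : ‖z - x₀‖ ≤ d := by
    rw [EuclideanSpace.norm_eq]
    simp only [Real.norm_eq_abs, sq_abs]
    have hsum : ∑ j, ((z - x₀) j)^2 ≤ (n : ℝ) * (ℓ/2)^2 := by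
      calc ∑ j, ((z - x₀) j)^2 ≤ ∑ _j : Fin n, (ℓ/2)^2 := by
            apply Finset.sum_le_sum
            intro j _
            have : (z - x₀) j = z j - x₀ j := rfl
            rw [this, ← sq_abs]
            exact pow_le_pow_left₀ (abs_nonneg _) (hz j) 2
        _ = (n : ℝ) * (ℓ/2)^2 := by simp [mul_comm]
    calc Real.sqrt (∑ j, ((z - x₀) j)^2) ≤ Real.sqrt ((n : ℝ) * (ℓ/2)^2) :=
          Real.sqrt_le_sqrt hsum
      _ = d := by
          rw [Real.sqrt_mul (by positivity), Real.sqrt_sq (by positivity)]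
  -- hy2 in terms of d
  have hA : 2 * (2 + A₁) * d < A₁ * ‖y - x₀‖ := by
    have h := mul_lt_mul_of_pos_left hy2 hA₁
    have e : A₁ * (Real.sqrt n * (2 / A₁ + 1) * ℓ) = 2 * (2 + A₁) * d := by
      rw [hd_def]; field_simp
    linarith [e ▸ h]
  have hr_pos : 0 < ‖y - x₀‖ := by nlinarith
  have hr_gt : d < ‖y - x₀‖ := by nlinarith
  -- numerator bound
  have hnum : 2 * A₁ * ‖y - x₀‖ < y i - x₀ i := (lt_div_iff₀ hr_pos).mp hy1
  -- triangle inequalities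
  have htri : ‖y - z‖ ≤ ‖y - x₀‖ + ‖z - x₀‖ := by
    calc ‖y - z‖ = ‖(y - x₀) - (z - x₀)‖ := congrArg norm (by abel)
      _ ≤ ‖y - x₀‖ + ‖z - x₀‖ := norm_sub_le _ _
  have htri2 : ‖y - x₀‖ - ‖z - x₀‖ ≤ ‖y - z‖ := by
    calc ‖y - x₀‖ - ‖z - x₀‖ = ‖(y - z) + (z - x₀)‖ - ‖z - x₀‖ := by rw [show (y - z) + (z - x₀) = y - x₀ from by abel]
      _ ≤ ‖y - z‖ + ‖z - x₀‖ - ‖z - x₀‖ := by linarith [norm_add_le (y - z) (z - x₀)]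
      _ = ‖y - z‖ := by ring
  have hyz_pos : 0 < ‖y - z‖ := by linarith
  rw [le_div_iff₀ hyz_pos]
  have hzi : z i - x₀ i ≤ ℓ / 2 := (abs_le.mp (hz i)).2
  have hl2d : ℓ / 2 ≤ d := by nlinarith
  nlinarith [hA, hnum, htri, hzx, hzi, hl2d, hA₁, hA₁', hd_pos]
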